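/- arXiv:1311.6683 — 2 statements merged into one kernel-verified Lean document; each statement's English description precedes it below -/
import Mathlib

section
/- Dwass formula consequence: let τ be a Galton–Watson tree with offspring distribution p on ℕ (subcritical or critical so that τ is a.s. finite), let (X_i) be i.i.d. with law p and S_n=Σ_{i=1}^n X_i. Then for every k∈ℕ* and n≥k, the probability that a forest of k i.i.d. GW(p) trees has total size n equals (k/n)·P(S_n = n−k). -/
/-- `walk p n m = P(S_n = m)` for the random walk with i.i.d. steps of law `p`. -/
noncomputable def walk (p : ℕ → ℝ) : ℕ → ℕ → ℝ
  | 0, m => if m = 0 then 1 else 0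
  | n + 1, m => ∑ j ∈ Finset.range (m + 1), p j * walk p n (m - j)

/-- `walkZ p n m`, allowing an integer target (zero for negative targets). -/
noncomputable def walkZ (p : ℕ → ℝ) (n : ℕ) (m : ℤ) : ℝ :=
  if 0 ≤ m then walk p n m.toNat else 0

/-- Version allowing an integer number of steps. -/
noncomputable def walkZZ (p : ℕ → ℝ) (n m : ℤ) : ℝ :=
  if 0 ≤ n then walkZ p n.toNat m else 0

/-- Finite rooted ordered trees. -/
inductive GWT where
  | node : List GWT → GWT

/-- Number of vertices of a finite tree. -/
def GWT.size : GWT → ℕ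
  | .node cs => 1 + (cs.attach.map (fun c => GWT.size c.1)).sum
decreasing_by
  have := List.sizeOf_lt_of_mem c.2
  simp only [GWT.node.sizeOf_spec] at *
  omega

/-- The Galton–Watson weight `∏_{u ∈ t} p(k_u(t))` of a finite tree,
i.e. `P(τ = t)` for a GW tree `τ` with offspring distribution `p`. -/
noncomputable def GWT.wt (p : ℕ → ℝ) : GWT → ℝ
  | .node cs => p cs.length * (cs.attach.map (fun c => GWT.wt p c.1)).prod
decreasing_by
  have := List.sizeOf_lt_of_mem c.2
  simp only [GWT.node.sizeOf_spec] at *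
  omega

/-- `P_k(|forest| = n)`: probability that a forest of `k` i.i.d. GW(p) trees
has total progeny `n`. -/
noncomputable def forestProb (p : ℕ → ℝ) (k n : ℕ) : ℝ :=
  ∑' f : {l : List GWT // l.length = k ∧ (l.map GWT.size).sum = n},
    ((f : List GWT).map (GWT.wt p)).prod

lemma GWT.size_node (cs : List GWT) : (GWT.node cs).size = 1 + (cs.map GWT.size).sum := by
  rw [GWT.size, List.attach_map_val]

lemma GWT.one_le_size (t : GWT) : 1 ≤ t.size := by
  cases t with
  | node cs => rw [GWT.size_node]; omega

lemma length_le_tot (l : List GWT) : l.length ≤ (l.map GWT.size).sum := by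
  induction l with
  | nil => simp
  | cons h t ih => simp only [List.map_cons, List.sum_cons, List.length_cons]
                   have := GWT.one_le_size h; omega

/-- encoding for finiteness -/
def treeEnc (n : ℕ) : {t : GWT // t.size ≤ n + 1} →
    Σ k : Fin (n + 1), {l : List {t : GWT // t.size ≤ n} // l.length = k} :=
  fun x =>
    match x with
    | ⟨.node cs, h⟩ =>
      ⟨⟨cs.length, by
          rw [GWT.size_node] at h
          have := length_le_tot cs
          omega⟩,
        ⟨cs.attach.map (fun c => ⟨c.1, by
            rw [GWT.size_node] at h
            have : c.1.size ≤ (cs.map GWT.size).sum :=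
              List.le_sum_of_mem (List.mem_map_of_mem (f := GWT.size) c.2)
            omega⟩),
          by simp⟩⟩

lemma treeEnc_val (n : ℕ) (x : {t : GWT // t.size ≤ n + 1}) :
    GWT.node (((treeEnc n x).2.1).map Subtype.val) = x.1 := by
  obtain ⟨t, h⟩ := x
  cases t with
  | node cs =>
    simp [treeEnc, List.map_map, List.attach_map_val]

instance finite_tree_le : ∀ n : ℕ, Finite {t : GWT // t.size ≤ n} := by
  intro n
  induction n with
  | zero =>
    have : IsEmpty {t : GWT // t.size ≤ 0} :=
      ⟨fun x => by have := GWT.one_le_size x.1; omega⟩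
    infer_instance
  | succ n ih =>
    haveI := ih
    haveI : ∀ k : Fin (n+1), Finite {l : List {t : GWT // t.size ≤ n} // l.length = k} := by
      intro k
      haveI : Fintype {t : GWT // t.size ≤ n} := Fintype.ofFinite _
      haveI : Fintype {l : List {t : GWT // t.size ≤ n} // l.length = (k : ℕ)} :=
        inferInstanceAs (Fintype (List.Vector _ _))
      infer_instance
    apply Finite.of_injective (treeEnc n)
    intro a b hab
    apply Subtype.ext
    rw [← treeEnc_val n a, ← treeEnc_val n b, hab]

lemma GWT.wt_node (p : ℕ → ℝ) (cs : List GWT) :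
    (GWT.node cs).wt p = p cs.length * (cs.map (GWT.wt p)).prod := by
  rw [GWT.wt, List.attach_map_val]

abbrev Forest (k n : ℕ) : Type := {l : List GWT // l.length = k ∧ (l.map GWT.size).sum = n}

def forestEnc (k n : ℕ) : Forest k n → {l : List {t : GWT // t.size ≤ n} // l.length = k} :=
  fun x => ⟨x.1.attach.map (fun c => ⟨c.1, by
      have h1 := List.le_sum_of_mem (List.mem_map_of_mem (f := GWT.size) c.2)
      have h2 := x.2.2
      omega⟩),
    by rw [List.length_map, List.length_attach]; exact x.2.1⟩

lemma forestEnc_val (k n : ℕ) (x : Forest k n) :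
    ((forestEnc k n x).1).map Subtype.val = x.1 := by
  simp [forestEnc, List.map_map, List.attach_map_val]

instance finite_forest (k n : ℕ) : Finite (Forest k n) := by
  haveI : Fintype {t : GWT // t.size ≤ n} := Fintype.ofFinite _
  haveI : Fintype {l : List {t : GWT // t.size ≤ n} // l.length = k} := inferInstanceAs (Fintype (List.Vector _ _))
  apply Finite.of_injective (forestEnc k n)
  intro a b hab
  apply Subtype.ext
  rw [← forestEnc_val k n a, ← forestEnc_val k n b, hab]

noncomputable instance (k n : ℕ) : Fintype (Forest k n) := Fintype.ofFinite _

lemma forestProb_eq_sum (p : ℕ → ℝ) (k n : ℕ) :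
    forestProb p k n = ∑ f : Forest k n, ((f : List GWT).map (GWT.wt p)).prod :=
  tsum_fintype _

lemma forestProb_zero_zero (p : ℕ → ℝ) : forestProb p 0 0 = 1 := by
  rw [forestProb_eq_sum]
  letI : Unique (Forest 0 0) :=
    ⟨⟨⟨[], by simp⟩⟩, by rintro ⟨l, h1, h2⟩; apply Subtype.ext; simpa using List.length_eq_zero_iff.mp h1⟩
  rw [Finset.univ_unique, Finset.sum_singleton]
  rfl

lemma forestProb_eq_zero (p : ℕ → ℝ) (k n : ℕ) (h : n < k) : forestProb p k n = 0 := by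
  rw [forestProb_eq_sum]
  haveI : IsEmpty (Forest k n) := ⟨by
    rintro ⟨l, h1, h2⟩
    have := length_le_tot l
    omega⟩
  simp

lemma forestProb_zero_succ (p : ℕ → ℝ) (n : ℕ) : forestProb p 0 (n+1) = 0 := by
  rw [forestProb_eq_sum]
  haveI : IsEmpty (Forest 0 (n+1)) := ⟨by
    rintro ⟨l, h1, h2⟩
    rw [List.length_eq_zero_iff.mp h1] at h2
    simp at h2⟩
  simp
def fwd (K N : ℕ) : Forest (K+1) (N+1) → Σ j : Fin (N+1), Forest (K + j) N
  | ⟨[], h⟩ => absurd h.1 (by simp)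
  | ⟨.node cs :: rest, h⟩ =>
    ⟨⟨cs.length, by
        obtain ⟨h1, h2⟩ := h
        rw [List.map_cons, List.sum_cons, GWT.size_node] at h2
        have := length_le_tot cs
        omega⟩,
      ⟨cs ++ rest, by
        show (cs ++ rest).length = K + cs.length
        obtain ⟨h1, h2⟩ := h
        rw [List.length_cons] at h1
        rw [List.length_append]
        omega, by
        obtain ⟨h1, h2⟩ := h
        rw [List.map_cons, List.sum_cons, GWT.size_node] at h2
        rw [List.map_append, List.sum_append]
        omega⟩⟩

def bwd (K N : ℕ) : (Σ j : Fin (N+1), Forest (K + j) N) → Forest (K+1) (N+1) :=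
  fun s => ⟨GWT.node (s.2.1.take s.1) :: s.2.1.drop s.1, by
    obtain ⟨h1, h2⟩ := s.2.2
    rw [List.length_cons, List.length_drop, h1]
    have : (s.1 : ℕ) ≤ K + s.1 := Nat.le_add_left _ _
    omega, by
    obtain ⟨h1, h2⟩ := s.2.2
    have hsplit : ((s.2.1.take (s.1 : ℕ)).map GWT.size).sum
        + ((s.2.1.drop (s.1 : ℕ)).map GWT.size).sum = (s.2.1.map GWT.size).sum := by
      rw [← List.sum_append, ← List.map_append, List.take_append_drop]
    rw [List.map_cons, List.sum_cons, GWT.size_node]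
    omega⟩

noncomputable def forestEquiv (K N : ℕ) : Forest (K+1) (N+1) ≃ Σ j : Fin (N+1), Forest (K + j) N where
  toFun := fwd K N
  invFun := bwd K N
  left_inv := by
    rintro ⟨l, h⟩
    match l, h with
    | .node cs :: rest, h =>
      apply Subtype.ext
      show GWT.node ((cs ++ rest).take cs.length) :: (cs ++ rest).drop cs.length = _
      rw [List.take_left, List.drop_left]
  right_inv := by
    rintro ⟨⟨j, hj⟩, ⟨f, h1, h2⟩⟩
    have hjf : j ≤ f.length := by
      rw [h1]; exact Nat.le_add_left _ _
    have hlen : (f.take j).length = j := by rw [List.length_take]; omega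
    set s : Σ j : Fin (N+1), Forest (K + j) N := ⟨⟨j, hj⟩, ⟨f, h1, h2⟩⟩ with hs
    have hval : ((fwd K N (bwd K N s)).1 : ℕ) = (f.take j).length := rfl
    have hcoe : ((fwd K N (bwd K N s)).2 : List GWT) = f.take j ++ f.drop j := rfl
    apply Sigma.ext
    · exact Fin.ext (hval.trans hlen)
    · apply (Subtype.heq_iff_coe_eq ?_).2
      · rw [hcoe]; exact List.take_append_drop j f
      · intro x
        rw [hval.trans hlen]
example : True := trivial
lemma weight_fwd (p : ℕ → ℝ) (K N : ℕ) (x : Forest (K+1) (N+1)) :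
    ((x : List GWT).map (GWT.wt p)).prod =
      p ((fwd K N x).1 : ℕ) * (((fwd K N x).2 : List GWT).map (GWT.wt p)).prod := by
  match x with
  | ⟨.node cs :: rest, h⟩ =>
    show ((GWT.node cs :: rest).map (GWT.wt p)).prod
      = p cs.length * ((cs ++ rest).map (GWT.wt p)).prod
    rw [List.map_cons, List.prod_cons, GWT.wt_node, List.map_append, List.prod_append]
    ring

lemma forest_rec (p : ℕ → ℝ) (K N : ℕ) :
    forestProb p (K+1) (N+1) = ∑ j ∈ Finset.range (N+1), p j * forestProb p (K+j) N := by
  rw [forestProb_eq_sum, ← Fin.sum_univ_eq_sum_range (fun j => p j * forestProb p (K+j) N)]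
  have step1 : ∀ j : Fin (N+1), p j * forestProb p (K+j) N
      = ∑ y : Forest (K + j) N, p (j:ℕ) * ((y : List GWT).map (GWT.wt p)).prod := by
    intro j
    rw [forestProb_eq_sum, Finset.mul_sum]
  simp_rw [step1]
  rw [show (∑ j : Fin (N+1), ∑ y : Forest (K + j) N, p (j:ℕ) * ((y : List GWT).map (GWT.wt p)).prod)
      = ∑ x : Σ j : Fin (N+1), Forest (K + j) N, p (x.1 : ℕ) * ((x.2 : List GWT).map (GWT.wt p)).prod by
    rw [← Finset.univ_sigma_univ, Finset.sum_sigma]]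
  exact Fintype.sum_equiv (forestEquiv K N) _ _ (weight_fwd p K N)

lemma walk_zero (p : ℕ → ℝ) (m : ℕ) : walk p 0 m = if m = 0 then 1 else 0 := by rw [walk]

lemma walk_succ (p : ℕ → ℝ) (n m : ℕ) :
    walk p (n+1) m = ∑ j ∈ Finset.range (m + 1), p j * walk p n (m - j) := by rw [walk]

lemma aux1 (m a : ℕ) (ha : a ≤ m) (g : ℕ → ℝ) :
    ∑ i ∈ Finset.range (m - a + 1), g i = ∑ i ∈ Finset.range (m+1), if a + i ≤ m then g i else 0 := by
  rw [← Finset.sum_filter]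
  congr 1
  ext i
  simp only [Finset.mem_filter, Finset.mem_range]
  omega

lemma tri_swap (m : ℕ) (f : ℕ → ℕ → ℝ) :
    ∑ j ∈ Finset.range (m+1), ∑ i ∈ Finset.range (m - j + 1), f j i
      = ∑ i ∈ Finset.range (m+1), ∑ j ∈ Finset.range (m - i + 1), f j i := by
  calc ∑ j ∈ Finset.range (m+1), ∑ i ∈ Finset.range (m - j + 1), f j i
      = ∑ j ∈ Finset.range (m+1), ∑ i ∈ Finset.range (m+1), if j + i ≤ m then f j i else 0 :=
        Finset.sum_congr rfl fun j hj =>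
          aux1 m j (Nat.lt_succ_iff.mp (Finset.mem_range.mp hj)) _
    _ = ∑ i ∈ Finset.range (m+1), ∑ j ∈ Finset.range (m+1), if j + i ≤ m then f j i else 0 :=
        Finset.sum_comm
    _ = ∑ i ∈ Finset.range (m+1), ∑ j ∈ Finset.range (m - i + 1), f j i := by
        refine Finset.sum_congr rfl fun i hi => ?_
        rw [aux1 m i (Nat.lt_succ_iff.mp (Finset.mem_range.mp hi)) (fun j => f j i)]
        exact Finset.sum_congr rfl fun j _ => by rw [Nat.add_comm i j]

lemma walk_key (p : ℕ → ℝ) : ∀ n m : ℕ,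
    (m : ℝ) * walk p (n+1) m
      = ((n : ℝ) + 1) * ∑ j ∈ Finset.range (m+1), (j : ℝ) * p j * walk p n (m - j) := by
  intro n
  induction n with
  | zero =>
    intro m
    rw [walk_succ]
    have h1 : ∑ j ∈ Finset.range (m+1), p j * walk p 0 (m - j) = p m := by
      rw [Finset.sum_eq_single m]
      · rw [walk_zero]; simp
      · intro j hj hne
        rw [walk_zero]
        have : ¬ (m - j = 0) := by
          have := Finset.mem_range.mp hj; omega
        rw [if_neg this, mul_zero]
      · intro h; exact absurd (Finset.self_mem_range_succ m) h
    have h2 : ∑ j ∈ Finset.range (m+1), (j:ℝ) * p j * walk p 0 (m - j) = (m:ℝ) * p m := by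
      rw [Finset.sum_eq_single m]
      · rw [walk_zero]; simp [mul_assoc]
      · intro j hj hne
        rw [walk_zero]
        have : ¬ (m - j = 0) := by
          have := Finset.mem_range.mp hj; omega
        rw [if_neg this, mul_zero]
      · intro h; exact absurd (Finset.self_mem_range_succ m) h
    rw [h1, h2]; ring
  | succ n ih =>
    intro m
    rw [walk_succ, Finset.mul_sum]
    have split : ∀ j ∈ Finset.range (m+1),
        (m:ℝ) * (p j * walk p (n+1) (m - j))
          = p j * (((m - j : ℕ) : ℝ) * walk p (n+1) (m - j)) + (j:ℝ) * p j * walk p (n+1) (m - j) := by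
      intro j hj
      have hjm : j ≤ m := Nat.lt_succ_iff.mp (Finset.mem_range.mp hj)
      have : ((m - j : ℕ) : ℝ) = (m:ℝ) - (j:ℝ) := by
        push_cast [hjm]; ring
      rw [this]; ring
    rw [Finset.sum_congr rfl split, Finset.sum_add_distrib]
    have S1 : ∑ j ∈ Finset.range (m+1), p j * (((m - j : ℕ) : ℝ) * walk p (n+1) (m - j))
        = ((n:ℝ)+1) * ∑ i ∈ Finset.range (m+1), (i:ℝ) * p i * walk p (n+1) (m - i) := by
      calc ∑ j ∈ Finset.range (m+1), p j * (((m - j : ℕ) : ℝ) * walk p (n+1) (m - j))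
          = ∑ j ∈ Finset.range (m+1), ∑ i ∈ Finset.range ((m - j) + 1),
              ((n:ℝ)+1) * (p j * ((i:ℝ) * p i * walk p n (m - j - i))) := by
            refine Finset.sum_congr rfl fun j hj => ?_
            rw [ih (m - j), Finset.mul_sum, Finset.mul_sum]
            exact Finset.sum_congr rfl fun i _ => by ring
        _ = ∑ i ∈ Finset.range (m+1), ∑ j ∈ Finset.range ((m - i) + 1),
              ((n:ℝ)+1) * (p j * ((i:ℝ) * p i * walk p n (m - j - i))) :=
            tri_swap m _
        _ = ((n:ℝ)+1) * ∑ i ∈ Finset.range (m+1), (i:ℝ) * p i * walk p (n+1) (m - i) := by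
            rw [Finset.mul_sum]
            refine Finset.sum_congr rfl fun i hi => ?_
            rw [walk_succ, Finset.mul_sum, Finset.mul_sum]
            refine Finset.sum_congr rfl fun j hj => ?_
            rw [show m - j - i = m - i - j by omega]
            ring
    rw [S1]
    push_cast
    ring
lemma main_lemma (p : ℕ → ℝ) : ∀ N K : ℕ, K ≤ N →
    forestProb p (K+1) (N+1) = (((K:ℝ)+1)/((N:ℝ)+1)) * walk p (N+1) (N - K) := by
  intro N
  induction N with
  | zero =>
    intro K hK
    interval_cases K
    rw [forest_rec, walk_succ]
    simp [forestProb_zero_zero, walk_zero]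
  | succ N ih =>
    intro K hK
    set M := N + 1 - K with hMdef
    have hM1 : M + K = N + 1 := by omega
    rw [forest_rec]
    have hterm : ∀ j ∈ Finset.range (N+2), p j * forestProb p (K+j) (N+1)
        = if j ≤ M then p j * ((((K:ℝ)+(j:ℝ))/((N:ℝ)+1)) * walk p (N+1) (M - j)) else 0 := by
      intro j hj
      by_cases hjM : j ≤ M
      · rw [if_pos hjM]
        rcases Nat.eq_zero_or_pos (K + j) with h0 | hpos
        · have hK0 : K = 0 := by omega
          have hj0 : j = 0 := by omega
          subst hK0; subst hj0
          rw [forestProb_zero_succ]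
          simp
        · obtain ⟨K', hK'⟩ : ∃ K', K + j = K' + 1 := ⟨K + j - 1, by omega⟩
          have hK'N : K' ≤ N := by omega
          rw [hK', ih K' hK'N]
          have harg : N - K' = M - j := by omega
          have hcast : ((K':ℝ)+1) = (K:ℝ) + (j:ℝ) := by
            have : (K' : ℕ) + 1 = K + j := hK'.symm
            exact_mod_cast congrArg (Nat.cast : ℕ → ℝ) this
          rw [harg, hcast]
      · rw [if_neg hjM, forestProb_eq_zero p _ _ (by omega), mul_zero]
    rw [Finset.sum_congr rfl hterm]
    have hsub : ∑ j ∈ Finset.range (N+2),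
        (if j ≤ M then p j * ((((K:ℝ)+(j:ℝ))/((N:ℝ)+1)) * walk p (N+1) (M - j)) else 0)
        = ∑ j ∈ Finset.range (M+1), p j * ((((K:ℝ)+(j:ℝ))/((N:ℝ)+1)) * walk p (N+1) (M - j)) := by
      rw [← Finset.sum_filter]
      congr 1
      ext i
      simp only [Finset.mem_filter, Finset.mem_range]
      omega
    rw [hsub]
    set A := ∑ j ∈ Finset.range (M+1), p j * walk p (N+1) (M - j) with hAdef
    set B := ∑ j ∈ Finset.range (M+1), (j:ℝ) * p j * walk p (N+1) (M - j) with hBdef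
    have hA : walk p (N+2) M = A := walk_succ p (N+1) M
    have hB : (M:ℝ) * walk p (N+2) M = ((N:ℝ)+2) * B := by
      have := walk_key p (N+1) M
      push_cast at this
      convert this using 2 <;> ring
    have hsplit : ∑ j ∈ Finset.range (M+1), p j * ((((K:ℝ)+(j:ℝ))/((N:ℝ)+1)) * walk p (N+1) (M - j))
        = ((K:ℝ)/((N:ℝ)+1)) * A + (1/((N:ℝ)+1)) * B := by
      rw [hAdef, hBdef, Finset.mul_sum, Finset.mul_sum, ← Finset.sum_add_distrib]
      refine Finset.sum_congr rfl fun j _ => ?_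
      ring
    rw [hsplit]
    have hMcast : (M:ℝ) = (N:ℝ) + 1 - (K:ℝ) := by
      rw [hMdef]
      push_cast [Nat.cast_sub (by omega : K ≤ N + 1)]
      ring
    have hNK : ((N:ℕ)+1) - K = M := rfl
    rw [hNK, hA] at *
    have hBval : B = ((M:ℝ) * A) / ((N:ℝ)+2) := by
      rw [← hA] at hB ⊢
      field_simp
      linarith [hB]
    rw [hBval, hMcast]
    have h2 : ((N:ℝ)+1+1) = (N:ℝ)+2 := by ring
    push_cast
    rw [hA]
    field_simp
    ring


theorem stmt15 (p : ℕ → ℝ)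
    (hp : ∀ k, 0 ≤ p k) (hpsum : ∑' k, p k = 1)
    (hp0 : 0 < p 0)
    (hmean : Summable (fun k : ℕ => (k : ℝ) * p k))
    (hμle : ∑' k : ℕ, (k : ℝ) * p k ≤ 1) :
    ∀ k n : ℕ, 1 ≤ k → k ≤ n →
      forestProb p k n = ((k : ℝ) / n) * walk p n (n - k) := by
  intro k n hk hn
  obtain ⟨K, rfl⟩ : ∃ K, k = K + 1 := ⟨k - 1, by omega⟩
  obtain ⟨N, rfl⟩ : ∃ N, n = N + 1 := ⟨n - 1, by omega⟩
  have hK : K ≤ N := by omega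
  rw [show N + 1 - (K + 1) = N - K from by omega, main_lemma p N K hK]
  push_cast
  ring
end

section
/- Identity for weighted sums (Lemma SX): let X have law p, independent of i.i.d. (X_i) with law p^A, S_n = Σ_{i=1}^n X_i, and set n_j = n − 1_{A}(j). Then for all ℓ ∈ ℤ and n ≥ 2: E[(n/n_X)·X·1_{X + S_{n_X} = n_X + ℓ}] = ℓ·E[(n/n_X)·1_{X + S_{n_X} = n_X + ℓ}] − (ℓ−1)·P(S_n = n+ℓ−1). -/
open scoped Classical ENNReal

/-- Law of the sum of `n` i.i.d. copies drawn from `q`. -/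
noncomputable def sumIid (q : PMF ℕ) : ℕ → PMF ℕ
  | 0 => PMF.pure 0
  | n + 1 => q.bind fun a => (sumIid q n).map fun b => a + b

/-- Law of `X_A = Σ_{k=1}^{N-1} Y'_k + Y''`. -/
noncomputable def pXA (pN pY' pY'' : PMF ℕ) : PMF ℕ :=
  pN.bind fun n => (sumIid pY' (n - 1)).bind fun s => pY''.map fun y => s + y

open Finset

/-- extension of a sequence to ℤ by zero -/
noncomputable def extZ (q : ℕ → ℝ) (m : ℤ) : ℝ := if 0 ≤ m then q m.toNat else 0

lemma walkZ_neg (q : ℕ → ℝ) (n : ℕ) {m : ℤ} (h : m < 0) : walkZ q n m = 0 := by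
  simp [walkZ, not_le.mpr h]

lemma walkZ_zero_eq (q : ℕ → ℝ) (m : ℤ) : walkZ q 0 m = if m = 0 then 1 else 0 := by
  rcases le_or_gt 0 m with h | h
  · simp only [walkZ, if_pos h, walk]
    by_cases hm : m = 0 <;> simp [hm] <;> omega
  · rw [walkZ_neg _ _ h, if_neg (by omega)]

lemma walkZ_succ (q : ℕ → ℝ) (n : ℕ) (m : ℤ) (M : ℕ) (h : m ≤ M) :
    walkZ q (n+1) m = ∑ j ∈ range (M+1), q j * walkZ q n (m - j) := by
  rcases le_or_gt 0 m with hm | hm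
  · obtain ⟨t, rfl⟩ : ∃ t : ℕ, m = t := ⟨m.toNat, (Int.toNat_of_nonneg hm).symm⟩
    have ht : t ≤ M := by exact_mod_cast h
    rw [show walkZ q (n+1) t = walk q (n+1) t by simp [walkZ]]
    rw [show walk q (n+1) t = ∑ j ∈ range (t+1), q j * walk q n (t - j) from rfl]
    rw [← Finset.sum_subset (Finset.range_subset_range.mpr (by omega : t+1 ≤ M+1))]
    · apply Finset.sum_congr rfl
      intro j hj
      have hj' : j ≤ t := by simpa [Nat.lt_succ_iff] using hj
      have : ((t:ℤ) - j) = ((t - j : ℕ) : ℤ) := by omega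
      rw [this]
      simp [walkZ]
    · intro j _ hj
      have : t < j := by simp [Finset.mem_range, Nat.lt_succ_iff] at hj ⊢; omega
      rw [walkZ_neg _ _ (by omega : (t:ℤ) - j < 0), mul_zero]
  · rw [walkZ_neg _ _ hm]
    rw [eq_comm, Finset.sum_eq_zero]
    intro j _
    rw [walkZ_neg _ _ (by omega : m - j < 0), mul_zero]

lemma walk_zero_eq (q : ℕ → ℝ) (m : ℕ) : walk q 0 m = if m = 0 then 1 else 0 := rfl

lemma walk_one (q : ℕ → ℝ) (m : ℕ) : walk q 1 m = q m := by
  rw [show walk q 1 m = ∑ j ∈ range (m+1), q j * walk q 0 (m - j) from rfl]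
  rw [Finset.sum_eq_single m]
  · simp [walk_zero_eq]
  · intro j hj hjm
    have hj' : j ≤ m := by simpa [Nat.lt_succ_iff] using hj
    rw [walk_zero_eq, if_neg (by omega), mul_zero]
  · intro h; exact absurd (Finset.self_mem_range_succ m) h

lemma walkZ_one (q : ℕ → ℝ) (m : ℤ) : walkZ q 1 m = extZ q m := by
  unfold walkZ extZ
  rcases le_or_gt 0 m with h | h
  · simp [h, walk_one]
  · simp [not_le.mpr h]

lemma walkZ_succ_shift (q : ℕ → ℝ) (n : ℕ) (m : ℤ) (M d : ℕ) (h : m ≤ M) :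
    ∑ k ∈ range (M+1), extZ q ((k:ℤ) - d) * walkZ q n (m - k)
      = walkZ q (n+1) (m - d) := by
  rcases le_or_gt d M with hd | hd
  · rw [← Finset.sum_subset ((by intro x hx; simp only [Finset.mem_Ico] at hx; simp only [Finset.mem_range]; omega : Finset.Ico d (M+1) ⊆ range (M+1))) ?zero]
    case zero =>
      intro k hk hk2
      have : k < d := by
        simp [Finset.mem_range] at hk
        simp [Finset.mem_Ico] at hk2
        omega
      rw [show extZ q ((k:ℤ) - d) = 0 by rw [extZ, if_neg (by omega)], zero_mul]
    rw [Finset.sum_Ico_eq_sum_range]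
    rw [walkZ_succ q n (m - d) (M - d) (by omega)]
    rw [show M + 1 - d = (M - d) + 1 by omega]
    apply Finset.sum_congr rfl
    intro t _
    congr 1
    · rw [show ((d + t : ℕ) : ℤ) - d = ((t:ℕ):ℤ) by push_cast; ring]
      simp [extZ]
    · congr 1; push_cast; ring
  · rw [Finset.sum_eq_zero, eq_comm, walkZ_neg _ _ (by omega)]
    intro k hk
    simp only [Finset.mem_range] at hk
    rw [show extZ q ((k:ℤ) - d) = 0 by rw [extZ, if_neg (by omega)], zero_mul]

lemma sizeBiasZ (q : ℕ → ℝ) : ∀ (n : ℕ) (m : ℤ) (M : ℕ), m ≤ M →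
    (m : ℝ) * walkZ q (n+1) m
      = (n+1 : ℝ) * ∑ k ∈ range (M+1), (k : ℝ) * q k * walkZ q n (m - k) := by
  intro n
  induction n with
  | zero =>
    intro m M h
    rcases le_or_gt 0 m with hm | hm
    · obtain ⟨t, rfl⟩ : ∃ t : ℕ, m = t := ⟨m.toNat, (Int.toNat_of_nonneg hm).symm⟩
      have ht : t ≤ M := by exact_mod_cast h
      rw [Finset.sum_eq_single t]
      · rw [walkZ_zero_eq, if_pos (by omega)]
        rw [show walkZ q 1 t = extZ q t from walkZ_one q t]
        rw [show extZ q (t:ℤ) = q t by simp [extZ]]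
        push_cast
        ring
      · intro j hj hjt
        rw [walkZ_zero_eq, if_neg (by intro hc; exact hjt (by omega)), mul_zero]
      · intro hc; exact absurd (Finset.mem_range.mpr (by omega)) hc
    · rw [walkZ_neg _ _ hm, Finset.sum_eq_zero, mul_zero, mul_zero]
      intro k _
      rw [walkZ_zero_eq, if_neg (by omega), mul_zero]
  | succ n ih =>
    intro m M h
    rw [walkZ_succ q (n+1) m M h]
    rw [Finset.mul_sum]
    have key : ∀ j ∈ range (M+1),
        (m:ℝ) * (q j * walkZ q (n+1) (m - j))
          = q j * (((m:ℤ) - j : ℤ) : ℝ) * walkZ q (n+1) (m - j)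
            + (j : ℝ) * q j * walkZ q (n+1) (m - j) := by
      intro j _
      push_cast
      ring
    rw [Finset.sum_congr rfl key, Finset.sum_add_distrib]
    have e1 : ∑ j ∈ range (M+1), q j * (((m:ℤ) - j : ℤ) : ℝ) * walkZ q (n+1) (m - j)
        = (n+1 : ℝ) * ∑ k ∈ range (M+1), (k:ℝ) * q k * walkZ q (n+1) (m - k) := by
      have e2 : ∀ j ∈ range (M+1),
          q j * (((m:ℤ) - j : ℤ) : ℝ) * walkZ q (n+1) (m - j)
            = ∑ k ∈ range (M+1), (n+1:ℝ) * ((k:ℝ) * q k) * (q j * walkZ q n (m - k - j)) := by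
        intro j _
        rw [mul_assoc, ih (m - j) M (by omega), Finset.mul_sum, Finset.mul_sum]
        apply Finset.sum_congr rfl
        intro k _
        rw [show m - (j:ℤ) - k = m - k - j from by ring]
        ring
      rw [Finset.sum_congr rfl e2, Finset.sum_comm]
      have e3 : ∀ k ∈ range (M+1),
          ∑ j ∈ range (M+1), (n+1:ℝ) * ((k:ℝ) * q k) * (q j * walkZ q n (m - k - j))
            = (n+1:ℝ) * ((k:ℝ) * q k * walkZ q (n+1) (m - k)) := by
        intro k _
        rw [← Finset.mul_sum, walkZ_succ q n (m - k) M (by omega)]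
        ring
      rw [Finset.sum_congr rfl e3, ← Finset.mul_sum]
    rw [e1]
    push_cast
    ring

lemma oneStepZ (p q : ℕ → ℝ) (A : Set ℕ) (h0A : 0 ∈ A)
    (hrecZ : ∀ (m : ℤ) (M : ℕ), m + 1 ≤ M →
      extZ q m = (if 0 ≤ m ∧ m.toNat ∈ A then p m.toNat else 0)
        + ∑ j ∈ range (M+1), (if j ∈ A then 0 else p j) * extZ q (m + 1 - j)) :
    ∀ (n : ℕ) (m : ℤ) (M : ℕ), m + 1 ≤ M →
    walkZ q (n+1) m
      = ∑ j ∈ range (M+1), (if j ∈ A then p j else 0) * walkZ q n (m - j)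
        + ∑ j ∈ range (M+1), (if j ∈ A then 0 else p j) * walkZ q (n+1) (m + 1 - j) := by
  intro n m M h
  rw [walkZ_succ q n m M (by omega)]
  have key : ∀ k ∈ range (M+1),
      q k * walkZ q n (m - k)
        = (if k ∈ A then p k else 0) * walkZ q n (m - k)
          + ∑ j ∈ range (M+1), (if j ∈ A then 0 else p j) * extZ q ((k:ℤ) + 1 - j) * walkZ q n (m - k) := by
    intro k _
    rcases le_or_gt (k:ℤ) m with hk | hk
    · have hq : q k = (if k ∈ A then p k else 0)
          + ∑ j ∈ range (M+1), (if j ∈ A then 0 else p j) * extZ q ((k:ℤ) + 1 - j) := by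
        have := hrecZ (k : ℤ) M (by omega)
        simpa [extZ] using this
      rw [hq, add_mul, Finset.sum_mul]
    · rw [walkZ_neg _ _ (by omega : m - (k:ℤ) < 0)]
      rw [mul_zero, mul_zero, zero_add, Finset.sum_eq_zero]
      intro j _
      rw [mul_zero]
  rw [Finset.sum_congr rfl key, Finset.sum_add_distrib]
  congr 1
  rw [Finset.sum_comm]
  apply Finset.sum_congr rfl
  intro j _
  by_cases hj : j ∈ A
  · rw [if_pos hj, Finset.sum_eq_zero, eq_comm, zero_mul]
    intro k _
    rw [zero_mul, zero_mul]
  · rw [if_neg hj]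
    rcases Nat.eq_zero_or_pos j with rfl | hjpos
    · exact absurd h0A hj
    · obtain ⟨d, rfl⟩ : ∃ d, j = d + 1 := ⟨j - 1, by omega⟩
      have e5 : ∀ k ∈ range (M+1),
          p (d+1) * extZ q ((k:ℤ) + 1 - ((d+1:ℕ):ℤ)) * walkZ q n (m - k)
            = p (d+1) * (extZ q ((k:ℤ) - d) * walkZ q n (m - k)) := by
        intro k _
        rw [show (k:ℤ) + 1 - ((d+1:ℕ):ℤ) = (k:ℤ) - d from by push_cast; ring]
        ring
      rw [Finset.sum_congr rfl e5, ← Finset.mul_sum,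
        walkZ_succ_shift q n m M d (by omega)]
      rw [show m - (d:ℤ) = m + 1 - ((d+1:ℕ):ℤ) from by push_cast; ring]

lemma hrecZ_of (p q : ℕ → ℝ) (A : Set ℕ) (h0A : 0 ∈ A)
    (hrecN : ∀ t : ℕ, q t = (if t ∈ A then p t else 0)
      + ∑ k ∈ range (t+1), (if (k+1) ∈ A then 0 else p (k+1)) * q (t - k)) :
    ∀ (m : ℤ) (M : ℕ), m + 1 ≤ M →
      extZ q m = (if 0 ≤ m ∧ m.toNat ∈ A then p m.toNat else 0)
        + ∑ j ∈ range (M+1), (if j ∈ A then 0 else p j) * extZ q (m + 1 - j) := by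
  intro m M h
  rcases le_or_gt 0 m with hm | hm
  · obtain ⟨t, rfl⟩ : ∃ t : ℕ, m = t := ⟨m.toNat, (Int.toNat_of_nonneg hm).symm⟩
    have ht : t + 1 ≤ M := by exact_mod_cast h
    have e1 : ∑ j ∈ range (M+1), (if j ∈ A then 0 else p j) * extZ q ((t:ℤ) + 1 - j)
        = ∑ k ∈ range (t+1), (if (k+1) ∈ A then 0 else p (k+1)) * q (t - k) := by
      rw [← Finset.sum_subset
        (by intro x hx; simp only [Finset.mem_Ico] at hx; simp only [Finset.mem_range]; omega
          : Finset.Ico 1 (t+2) ⊆ range (M+1))]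
      · rw [Finset.sum_Ico_eq_sum_range]
        rw [show t + 2 - 1 = t + 1 from rfl]
        apply Finset.sum_congr rfl
        intro i hi
        have hi' : i ≤ t := by simpa [Nat.lt_succ_iff] using hi
        rw [show (t:ℤ) + 1 - ((1+i:ℕ):ℤ) = ((t - i : ℕ):ℤ) from by push_cast [hi']; ring]
        rw [show (1+i) = i+1 from by omega]
        simp [extZ]
      · intro j hj hj2
        simp only [Finset.mem_range] at hj
        simp only [Finset.mem_Ico] at hj2
        rcases Nat.eq_zero_or_pos j with rfl | hjpos
        · rw [if_pos h0A, zero_mul]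
        · rw [show extZ q ((t:ℤ) + 1 - j) = 0 from by rw [extZ, if_neg (by omega)], mul_zero]
    rw [e1]
    have e2 : (if 0 ≤ (t:ℤ) ∧ ((t:ℤ)).toNat ∈ A then p ((t:ℤ)).toNat else 0)
        = (if t ∈ A then p t else 0) := by
      simp
    rw [e2, show extZ q (t:ℤ) = q t from by simp [extZ]]
    exact hrecN t
  · rw [extZ, if_neg (by omega), if_neg (by omega; )]
    rw [Finset.sum_eq_zero, add_zero]
    intro j _
    rcases Nat.eq_zero_or_pos j with rfl | hjpos
    · rw [if_pos h0A, zero_mul]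
    · rw [show extZ q (m + 1 - j) = 0 from by rw [extZ, if_neg (by omega)], mul_zero]

lemma shiftApply (P : PMF ℕ) (c m : ℕ) :
    (P.map (fun y => c + y)) m = if c ≤ m then P (m - c) else 0 := by
  rw [PMF.map_apply]
  rcases le_or_gt c m with h | h
  · rw [if_pos h, tsum_eq_single (m - c)]
    · rw [if_pos (by omega)]
    · intro y hy
      rw [if_neg (by omega)]
  · rw [if_neg (not_le.mpr h), ENNReal.summable.tsum_eq_zero_iff |>.mpr]
    intro y
    rw [if_neg (by omega)]

/-- `G n` = law of sum of n iid Y' plus Y''. -/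
noncomputable def gpmf (pY' pY'' : PMF ℕ) (n : ℕ) : PMF ℕ :=
  (sumIid pY' n).bind fun s => pY''.map fun y => s + y

lemma gpmf_zero_apply (pY' pY'' : PMF ℕ) (m : ℕ) : gpmf pY' pY'' 0 m = pY'' m := by
  rw [gpmf, show sumIid pY' 0 = PMF.pure 0 from rfl, PMF.pure_bind, shiftApply]
  simp

lemma gpmf_succ (pY' pY'' : PMF ℕ) (n : ℕ) :
    gpmf pY' pY'' (n+1) = pY'.bind fun a => (gpmf pY' pY'' n).map fun z => a + z := by
  rw [gpmf, show sumIid pY' (n+1) = pY'.bind fun a => (sumIid pY' n).map fun b => a + b from rfl,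
    PMF.bind_bind]
  apply congrArg
  funext a
  rw [PMF.bind_map]
  have : ((fun s => pY''.map fun y => s + y) ∘ fun b => a + b)
      = fun s => (pY''.map fun y => s + y).map fun z => a + z := by
    funext s
    rw [PMF.map_comp]
    show PMF.map (fun y => (a + s) + y) pY'' = _
    congr 1
    funext y
    simp [Function.comp, add_assoc]
  rw [this, ← PMF.map_bind, gpmf]

lemma gpmf_succ_apply (pY' pY'' : PMF ℕ) (n m : ℕ) :
    gpmf pY' pY'' (n+1) m
      = ∑' k, pY' k * (if k ≤ m then gpmf pY' pY'' n (m - k) else 0) := by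
  rw [gpmf_succ, PMF.bind_apply]
  apply tsum_congr
  intro k
  rw [shiftApply]

lemma pXA_rec (p : ℕ → ℝ) (A : Set ℕ)
    (hp : ∀ k, 0 ≤ p k) (hpsum : ∑' k, p k = 1)
    (hApos : 0 < ∑' k : ℕ, A.indicator p k)
    (pN pY' pY'' : PMF ℕ)
    (hN : ∀ n : ℕ, pN n = if 1 ≤ n then
        ENNReal.ofReal ((∑' k : ℕ, A.indicator p k)
          * (1 - ∑' k : ℕ, A.indicator p k) ^ (n - 1)) else 0)
    (hY'' : ∀ k : ℕ, pY'' k = if k ∈ A then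
        ENNReal.ofReal (p k / ∑' j : ℕ, A.indicator p j) else 0)
    (hY' : ∀ k : ℕ, pY' k = if (k + 1) ∈ A then 0 else
        ENNReal.ofReal (p (k + 1) / (1 - ∑' j : ℕ, A.indicator p j))) :
    ∀ m : ℕ, ((pXA pN pY' pY'') m).toReal
      = (if m ∈ A then p m else 0)
        + ∑ k ∈ range (m+1), (if (k+1) ∈ A then 0 else p (k+1))
            * ((pXA pN pY' pY'') (m - k)).toReal := by
  set a := ∑' k : ℕ, A.indicator p k with ha
  have hps : Summable p := by
    by_contra hns
    rw [tsum_eq_zero_of_not_summable hns] at hpsum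
    norm_num at hpsum
  have hpsA : Summable (A.indicator p) := hps.indicator A
  have ha1 : a ≤ 1 := by
    rw [← hpsum]
    apply Summable.tsum_le_tsum _ hpsA hps
    intro k
    by_cases hk : k ∈ A <;> simp [Set.indicator_apply, hk, hp k]
  have hAc : ∀ j, j ∉ A → p j ≤ 1 - a := by
    intro j hj
    have hsum2 : a + ∑' k, Aᶜ.indicator p k = 1 := by
      rw [ha, ← Summable.tsum_add hpsA (hps.indicator Aᶜ), ← hpsum]
      apply tsum_congr
      intro k
      simp [Set.indicator_apply]
      by_cases hk : k ∈ A <;> simp [hk]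
    have hle : p j ≤ ∑' k, Aᶜ.indicator p k := by
      have := Summable.le_tsum (hps.indicator Aᶜ) j (fun k _ => Set.indicator_apply_nonneg (fun _ => hp k))
      simpa [Set.indicator_apply, hj] using this
    linarith
  have hr : ∀ x, (pXA pN pY' pY'') x = ∑' n, pN n * gpmf pY' pY'' (n-1) x := by
    intro x
    rfl
  have hshift : ∀ x, (∑' n, pN (n+1) * gpmf pY' pY'' n x) = (pXA pN pY' pY'') x := by
    intro x
    rw [hr x]
    conv_rhs => rw [tsum_eq_zero_add' ENNReal.summable]
    rw [show pN 0 = 0 by rw [hN 0]; norm_num, zero_mul, zero_add]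
    rfl
  have hb : ∀ n : ℕ, pN (n+2) = ENNReal.ofReal (1 - a) * pN (n+1) := by
    intro n
    rw [hN (n+2), hN (n+1), if_pos (by omega), if_pos (by omega)]
    rw [show n+2-1 = n+1 from rfl, show n+1-1 = n from rfl]
    rw [← ENNReal.ofReal_mul (by linarith)]
    congr 1
    ring
  have hstep : ∀ m, (∑' n, pN (n+2) * gpmf pY' pY'' (n+1) m)
      = ∑' k, (ENNReal.ofReal (1-a) * pY' k)
          * (if k ≤ m then (pXA pN pY' pY'') (m-k) else 0) := by
    intro m
    have e1 : ∀ n : ℕ, pN (n+2) * gpmf pY' pY'' (n+1) m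
        = ∑' k, (ENNReal.ofReal (1-a) * pY' k)
            * (pN (n+1) * (if k ≤ m then gpmf pY' pY'' n (m-k) else 0)) := by
      intro n
      rw [hb n, gpmf_succ_apply, mul_assoc, ← ENNReal.tsum_mul_left,
        ← ENNReal.tsum_mul_left]
      apply tsum_congr
      intro k
      by_cases hk : k ≤ m
      · simp only [if_pos hk]; ring
      · simp only [if_neg hk]; ring
    rw [tsum_congr e1, ENNReal.tsum_comm]
    apply tsum_congr
    intro k
    rw [ENNReal.tsum_mul_left]
    congr 1
    by_cases hk : k ≤ m
    · simp only [if_pos hk]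
      exact hshift (m-k)
    · simp only [if_neg hk]
      simp
  have hcoef1 : ∀ m, pN 1 * pY'' m = if m ∈ A then ENNReal.ofReal (p m) else 0 := by
    intro m
    rw [hN 1, hY'' m, if_pos le_rfl]
    by_cases hm : m ∈ A
    · rw [if_pos hm, if_pos hm, show (1:ℕ) - 1 = 0 from rfl, pow_zero, mul_one,
        ← ENNReal.ofReal_mul (le_of_lt hApos)]
      congr 1
      field_simp
    · rw [if_neg hm, if_neg hm, mul_zero]
  have hcoef2 : ∀ k : ℕ, ENNReal.ofReal (1-a) * pY' k
      = if (k+1) ∈ A then 0 else ENNReal.ofReal (p (k+1)) := by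
    intro k
    rw [hY' k]
    by_cases hk : (k+1) ∈ A
    · rw [if_pos hk, if_pos hk, mul_zero]
    · rw [if_neg hk, if_neg hk]
      rcases lt_or_eq_of_le (by linarith [hAc (k+1) hk, hp (k+1)] : (0:ℝ) ≤ 1 - a) with h1a | h1a
      · rw [← ENNReal.ofReal_mul (by linarith)]
        congr 1
        field_simp
      · have hp1 : p (k+1) ≤ 1 - a := hAc (k+1) hk
        have hp2 : p (k+1) = 0 := le_antisymm (by linarith) (hp (k+1))
        rw [hp2, ← h1a]
        simp
  have hkey : ∀ m, (pXA pN pY' pY'') m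
      = (if m ∈ A then ENNReal.ofReal (p m) else 0)
        + ∑ k ∈ range (m+1), (if (k+1) ∈ A then 0 else ENNReal.ofReal (p (k+1)))
            * (pXA pN pY' pY'') (m-k) := by
    intro m
    conv_lhs => rw [← hshift m]
    rw [tsum_eq_zero_add' ENNReal.summable, gpmf_zero_apply, hcoef1 m]
    congr 1
    rw [show (∑' n, pN (n+1+1) * gpmf pY' pY'' (n+1) m)
        = ∑' n, pN (n+2) * gpmf pY' pY'' (n+1) m from rfl, hstep m]
    rw [tsum_eq_sum (s := range (m+1)) ?van]
    case van =>
      intro k hk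
      simp only [Finset.mem_range] at hk
      rw [if_neg (by omega), mul_zero]
    apply Finset.sum_congr rfl
    intro k hk
    simp only [Finset.mem_range] at hk
    rw [if_pos (by omega), hcoef2 k]
  intro m
  rw [hkey m]
  have hne : ∀ k ∈ range (m+1),
      (if (k+1) ∈ A then 0 else ENNReal.ofReal (p (k+1))) * (pXA pN pY' pY'') (m-k) ≠ ⊤ := by
    intro k _
    apply ENNReal.mul_ne_top
    · by_cases hk : (k+1) ∈ A <;> simp [hk]
    · exact PMF.apply_ne_top _ _
  rw [ENNReal.toReal_add (by simp; by_cases hm : m ∈ A <;> simp [hm])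
    (ENNReal.sum_ne_top.mpr hne)]
  congr 1
  · by_cases hm : m ∈ A <;> simp [hm, ENNReal.toReal_ofReal (hp m)]
  · rw [ENNReal.toReal_sum hne]
    apply Finset.sum_congr rfl
    intro k _
    rw [ENNReal.toReal_mul]
    congr 1
    by_cases hk : (k+1) ∈ A <;> simp [hk, ENNReal.toReal_ofReal (hp (k+1))]

theorem stmt16 (p : ℕ → ℝ) (A : Set ℕ)
    (hp : ∀ k, 0 ≤ p k) (hpsum : ∑' k, p k = 1)
    (hp0 : 0 < p 0) (hp01 : p 0 + p 1 < 1)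
    (h0A : 0 ∈ A) (hApos : 0 < ∑' k : ℕ, A.indicator p k)
    (pN pY' pY'' : PMF ℕ)
    (hN : ∀ n : ℕ, pN n = if 1 ≤ n then
        ENNReal.ofReal ((∑' k : ℕ, A.indicator p k)
          * (1 - ∑' k : ℕ, A.indicator p k) ^ (n - 1)) else 0)
    (hY'' : ∀ k : ℕ, pY'' k = if k ∈ A then
        ENNReal.ofReal (p k / ∑' j : ℕ, A.indicator p j) else 0)
    (hY' : ∀ k : ℕ, pY' k = if (k + 1) ∈ A then 0 else
        ENNReal.ofReal (p (k + 1) / (1 - ∑' j : ℕ, A.indicator p j))) :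
    -- `q = p^A` is the law of `X_A`, `S_n` the walk with steps of law `p^A`,
    -- and `n_j = n - 1_A(j)`.
    ∀ (ℓ : ℤ) (n : ℕ), 2 ≤ n →
      (∑' j : ℕ, p j
          * ((n : ℝ) / (n - if j ∈ A then 1 else 0)) * (j : ℝ)
          * walkZ (fun k => ((pXA pN pY' pY'') k).toReal)
              (n - if j ∈ A then 1 else 0)
              (((n - if j ∈ A then 1 else 0 : ℕ) : ℤ) + ℓ - j))
        = (ℓ : ℝ) * (∑' j : ℕ, p j
              * ((n : ℝ) / (n - if j ∈ A then 1 else 0))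
              * walkZ (fun k => ((pXA pN pY' pY'') k).toReal)
                  (n - if j ∈ A then 1 else 0)
                  (((n - if j ∈ A then 1 else 0 : ℕ) : ℤ) + ℓ - j))
          - ((ℓ : ℝ) - 1)
            * walkZ (fun k => ((pXA pN pY' pY'') k).toReal) n ((n : ℤ) + ℓ - 1) := by
  intro ℓ n hn
  obtain ⟨k, rfl⟩ : ∃ k, n = k + 2 := ⟨n - 2, by omega⟩
  set q : ℕ → ℝ := fun x => ((pXA pN pY' pY'') x).toReal with hqdef
  have hrecN : ∀ t : ℕ, q t = (if t ∈ A then p t else 0)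
      + ∑ x ∈ Finset.range (t+1), (if (x+1) ∈ A then 0 else p (x+1)) * q (t - x) :=
    pXA_rec p A hp hpsum hApos pN pY' pY'' hN hY'' hY'
  have hrecZ := hrecZ_of p q A h0A hrecN
  have hone := oneStepZ p q A h0A hrecZ
  have hl : ℓ ≤ (ℓ.toNat : ℤ) := Int.self_le_toNat ℓ
  set M : ℕ := k + ℓ.toNat + 3 with hM
  have hvan : ∀ (j : ℕ), j ∉ Finset.range (M+1) →
      walkZ q (k + 2 - if j ∈ A then 1 else 0)
        (((k + 2 - if j ∈ A then 1 else 0 : ℕ) : ℤ) + ℓ - j) = 0 := by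
    intro j hj
    simp only [Finset.mem_range] at hj
    apply walkZ_neg
    by_cases hjA : j ∈ A <;> simp only [hjA, if_true, if_false] <;> omega
  rw [tsum_eq_sum (s := Finset.range (M+1)) (fun j hj => by rw [hvan j hj, mul_zero]),
      tsum_eq_sum (s := Finset.range (M+1)) (fun j hj => by rw [hvan j hj, mul_zero])]
  have expand : (ℓ:ℝ) * (∑ j ∈ range (M+1), p j
          * ((↑(k+2) : ℝ) / (↑(k+2) - if j ∈ A then 1 else 0))
          * walkZ q (k + 2 - if j ∈ A then 1 else 0)
              (((k + 2 - if j ∈ A then 1 else 0 : ℕ) : ℤ) + ℓ - j))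
        - (∑ j ∈ range (M+1), p j
          * ((↑(k+2) : ℝ) / (↑(k+2) - if j ∈ A then 1 else 0)) * (j : ℝ)
          * walkZ q (k + 2 - if j ∈ A then 1 else 0)
              (((k + 2 - if j ∈ A then 1 else 0 : ℕ) : ℤ) + ℓ - j))
      = ∑ j ∈ range (M+1), p j
          * ((↑(k+2) : ℝ) / (↑(k+2) - if j ∈ A then 1 else 0)) * ((ℓ:ℝ) - j)
          * walkZ q (k + 2 - if j ∈ A then 1 else 0)
              (((k + 2 - if j ∈ A then 1 else 0 : ℕ) : ℤ) + ℓ - j) := by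
    rw [Finset.mul_sum, ← Finset.sum_sub_distrib]
    apply Finset.sum_congr rfl
    intro j _
    ring
  have key : ∑ j ∈ range (M+1), p j
          * ((↑(k+2) : ℝ) / (↑(k+2) - if j ∈ A then 1 else 0)) * ((ℓ:ℝ) - j)
          * walkZ q (k + 2 - if j ∈ A then 1 else 0)
              (((k + 2 - if j ∈ A then 1 else 0 : ℕ) : ℤ) + ℓ - j)
      = ((ℓ:ℝ) - 1) * walkZ q (k+2) ((↑(k+2) : ℤ) + ℓ - 1) := by
    have split : ∀ j ∈ range (M+1), p j
          * ((↑(k+2) : ℝ) / (↑(k+2) - if j ∈ A then 1 else 0)) * ((ℓ:ℝ) - j)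
          * walkZ q (k + 2 - if j ∈ A then 1 else 0)
              (((k + 2 - if j ∈ A then 1 else 0 : ℕ) : ℤ) + ℓ - j)
        = (if j ∈ A then p j else 0) * (((k:ℝ)+2) / ((k:ℝ)+1)) * ((ℓ:ℝ) - j)
            * walkZ q (k+1) (((k:ℤ)+1) + ℓ - j)
          + (if j ∈ A then 0 else p j) * ((ℓ:ℝ) - j)
            * walkZ q (k+2) (((k:ℤ)+2) + ℓ - j) := by
      intro j _
      by_cases hj : j ∈ A
      · simp only [if_pos hj]
        rw [show k + 2 - 1 = k + 1 from rfl]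
        rw [show (((k+1 : ℕ) : ℤ) + ℓ - j) = ((k:ℤ)+1) + ℓ - j from by push_cast; ring]
        push_cast
        ring
      · simp only [if_neg hj]
        rw [Nat.sub_zero]
        rw [show (((k+2 : ℕ) : ℤ) + ℓ - j) = ((k:ℤ)+2) + ℓ - j from by push_cast; ring]
        push_cast
        rw [sub_zero, div_self (show ((k:ℝ)+2) ≠ 0 by positivity)]
        ring
    rw [Finset.sum_congr rfl split, Finset.sum_add_distrib]
    have tA : ∀ j ∈ range (M+1),
        (if j ∈ A then p j else 0) * (((k:ℝ)+2) / ((k:ℝ)+1)) * ((ℓ:ℝ) - j)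
            * walkZ q (k+1) (((k:ℤ)+1) + ℓ - j)
          = ((k:ℝ)+2) * ((if j ∈ A then p j else 0)
              * ∑ t ∈ range (M+1), (t:ℝ) * q t * walkZ q k ((((k:ℤ)+1) + ℓ - j) - t))
            - ((k:ℝ)+2) * ((if j ∈ A then p j else 0)
              * walkZ q (k+1) (((k:ℤ)+1) + ℓ - j)) := by
      intro j _
      have hsb := sizeBiasZ q k (((k:ℤ)+1) + ℓ - j) M (by omega)
      rw [show (((((k:ℤ)+1) + ℓ - j) : ℤ) : ℝ) = ((k:ℝ)+1) + (ℓ:ℝ) - (j:ℝ) from by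
        push_cast; ring] at hsb
      have hinv : ((k:ℝ)+1) * ((k:ℝ)+1)⁻¹ = 1 := mul_inv_cancel₀ (by positivity)
      linear_combination ((k:ℝ)+2) * ((k:ℝ)+1)⁻¹ * (if j ∈ A then p j else 0) * hsb
        - ((k:ℝ)+2) * (if j ∈ A then p j else 0)
            * (walkZ q (k+1) (((k:ℤ)+1) + ℓ - j)
               - ∑ t ∈ range (M+1), (t:ℝ) * q t * walkZ q k ((((k:ℤ)+1) + ℓ - j) - t)) * hinv
    have tB : ∀ j ∈ range (M+1),
        (if j ∈ A then 0 else p j) * ((ℓ:ℝ) - j)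
            * walkZ q (k+2) (((k:ℤ)+2) + ℓ - j)
          = ((k:ℝ)+2) * ((if j ∈ A then 0 else p j)
              * ∑ t ∈ range (M+1), (t:ℝ) * q t * walkZ q (k+1) ((((k:ℤ)+2) + ℓ - j) - t))
            - ((k:ℝ)+2) * ((if j ∈ A then 0 else p j)
              * walkZ q (k+2) (((k:ℤ)+2) + ℓ - j)) := by
      intro j _
      have hsb := sizeBiasZ q (k+1) (((k:ℤ)+2) + ℓ - j) M (by omega)
      rw [show (((((k:ℤ)+2) + ℓ - j) : ℤ) : ℝ) = ((k:ℝ)+2) + (ℓ:ℝ) - (j:ℝ) from by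
        push_cast; ring,
        show (((k+1:ℕ):ℝ) + 1) = (k:ℝ)+2 from by push_cast; ring] at hsb
      linear_combination (if j ∈ A then 0 else p j) * hsb
    rw [Finset.sum_congr rfl tA, Finset.sum_congr rfl tB,
      Finset.sum_sub_distrib, Finset.sum_sub_distrib, ← Finset.mul_sum, ← Finset.mul_sum,
      ← Finset.mul_sum, ← Finset.mul_sum]
    have hQ : (∑ j ∈ range (M+1), (if j ∈ A then p j else 0)
            * walkZ q (k+1) (((k:ℤ)+1) + ℓ - j))
          + (∑ j ∈ range (M+1), (if j ∈ A then 0 else p j)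
            * walkZ q (k+2) (((k:ℤ)+2) + ℓ - j))
        = walkZ q (k+2) ((↑(k+2) : ℤ) + ℓ - 1) := by
      have h1 := hone (k+1) ((↑(k+2) : ℤ) + ℓ - 1) M (by push_cast; omega)
      rw [h1]
      congr 1
      · apply Finset.sum_congr rfl
        intro j _
        rw [show ((↑(k+2) : ℤ) + ℓ - 1) - j = ((k:ℤ)+1) + ℓ - j from by push_cast; ring]
      · apply Finset.sum_congr rfl
        intro j _
        rw [show ((↑(k+2) : ℤ) + ℓ - 1) + 1 - j = ((k:ℤ)+2) + ℓ - j from by push_cast; ring]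
    have hP : (∑ j ∈ range (M+1), (if j ∈ A then p j else 0)
            * ∑ t ∈ range (M+1), (t:ℝ) * q t * walkZ q k ((((k:ℤ)+1) + ℓ - j) - t))
          + (∑ j ∈ range (M+1), (if j ∈ A then 0 else p j)
            * ∑ t ∈ range (M+1), (t:ℝ) * q t * walkZ q (k+1) ((((k:ℤ)+2) + ℓ - j) - t))
        = ∑ t ∈ range (M+1), (t:ℝ) * q t
            * walkZ q (k+1) (((↑(k+2) : ℤ) + ℓ - 1) - t) := by
      have swapA : (∑ j ∈ range (M+1), (if j ∈ A then p j else 0)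
            * ∑ t ∈ range (M+1), (t:ℝ) * q t * walkZ q k ((((k:ℤ)+1) + ℓ - j) - t))
          = ∑ t ∈ range (M+1), ∑ j ∈ range (M+1), (if j ∈ A then p j else 0)
              * ((t:ℝ) * q t * walkZ q k ((((k:ℤ)+1) + ℓ - j) - t)) := by
        rw [Finset.sum_comm]
        apply Finset.sum_congr rfl
        intro j _
        rw [Finset.mul_sum]
      have swapB : (∑ j ∈ range (M+1), (if j ∈ A then 0 else p j)
            * ∑ t ∈ range (M+1), (t:ℝ) * q t * walkZ q (k+1) ((((k:ℤ)+2) + ℓ - j) - t))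
          = ∑ t ∈ range (M+1), ∑ j ∈ range (M+1), (if j ∈ A then 0 else p j)
              * ((t:ℝ) * q t * walkZ q (k+1) ((((k:ℤ)+2) + ℓ - j) - t)) := by
        rw [Finset.sum_comm]
        apply Finset.sum_congr rfl
        intro j _
        rw [Finset.mul_sum]
      rw [swapA, swapB, ← Finset.sum_add_distrib]
      apply Finset.sum_congr rfl
      intro t _
      have honet := hone k (((k:ℤ)+1) + ℓ - t) M (by omega)
      have e1 : ∑ j ∈ range (M+1), (if j ∈ A then p j else 0)
            * ((t:ℝ) * q t * walkZ q k ((((k:ℤ)+1) + ℓ - j) - t))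
          = (t:ℝ) * q t * ∑ j ∈ range (M+1), (if j ∈ A then p j else 0)
              * walkZ q k ((((k:ℤ)+1) + ℓ - t) - j) := by
        rw [Finset.mul_sum]
        apply Finset.sum_congr rfl
        intro j _
        rw [show (((k:ℤ)+1) + ℓ - j) - t = (((k:ℤ)+1) + ℓ - t) - j from by ring]
        ring
      have e2 : ∑ j ∈ range (M+1), (if j ∈ A then 0 else p j)
            * ((t:ℝ) * q t * walkZ q (k+1) ((((k:ℤ)+2) + ℓ - j) - t))
          = (t:ℝ) * q t * ∑ j ∈ range (M+1), (if j ∈ A then 0 else p j)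
              * walkZ q (k+1) ((((k:ℤ)+1) + ℓ - t) + 1 - j) := by
        rw [Finset.mul_sum]
        apply Finset.sum_congr rfl
        intro j _
        rw [show (((k:ℤ)+2) + ℓ - j) - t = (((k:ℤ)+1) + ℓ - t) + 1 - j from by ring]
        ring
      rw [e1, e2, ← mul_add, ← honet]
      rw [show ((↑(k+2) : ℤ) + ℓ - 1) - t = ((k:ℤ)+1) + ℓ - t from by push_cast; ring]
    have hsb3 := sizeBiasZ q (k+1) ((↑(k+2) : ℤ) + ℓ - 1) M (by omega)
    rw [show ((((↑(k+2) : ℤ) + ℓ - 1) : ℤ) : ℝ) = (k:ℝ)+2+(ℓ:ℝ)-1 from by push_cast; ring,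
      show (((k+1:ℕ):ℝ) + 1) = (k:ℝ)+2 from by push_cast; ring] at hsb3
    linear_combination ((k:ℝ)+2) * hP - ((k:ℝ)+2) * hQ - hsb3
  linarith [expand, key]
end
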